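/- Let B be a real p×p matrix such that every complex eigenvalue of B has strictly positive real part. Then B is invertible and the improper integral ∫_0^∞ exp(−sB) ds converges (entrywise) and equals B^{−1}. -/

import Mathlib

open Matrix MeasureTheory


lemma aux_pow_le_exp {c s : ℝ} (hc : 0 < c) (hs : 0 ≤ s) (n : ℕ) :
    s ^ n / n.factorial ≤ Real.exp (c * s) / c ^ n := by
  rw [div_le_div_iff₀ (by positivity) (by positivity)]
  have h2 : (c * s) ^ n / n.factorial ≤ Real.exp (c * s) :=
    le_trans (Finset.single_le_sum (f := fun i => (c * s) ^ i / i.factorial)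
      (fun i _ => by positivity) (Finset.self_mem_range_succ n))
      (Real.sum_le_exp_of_nonneg (mul_nonneg hc.le hs) (n + 1))
  have h3 : (c * s) ^ n ≤ Real.exp (c * s) * n.factorial := by
    rw [div_le_iff₀ (by positivity)] at h2; exact h2
  calc s ^ n * c ^ n = (c * s) ^ n := by rw [mul_pow]; ring
    _ ≤ Real.exp (c * s) * n.factorial := h3
    _ = Real.exp (c * s) * (n.factorial : ℝ) := rfl

/-- mulVec as a linear map in the matrix argument -/
noncomputable def mulVecLeft (p : ℕ) (v : Fin p → ℂ) :
    Matrix (Fin p) (Fin p) ℂ →ₗ[ℂ] (Fin p → ℂ) where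
  toFun M := M *ᵥ v
  map_add' M N := Matrix.add_mulVec M N v
  map_smul' a M := Matrix.smul_mulVec a M v

lemma vec_bound (p : ℕ) (A : Matrix (Fin p) (Fin p) ℂ) (μ : ℂ) (v : Fin p → ℂ) (K : ℕ)
    (hv : ((A - μ • 1) ^ K) *ᵥ v = 0) (c : ℝ) (hc : 0 < c) (hμ : 2 * c ≤ μ.re) :
    ∃ C : ℝ, ∀ s : ℝ, 0 ≤ s →
      ‖NormedSpace.exp (-(s • A)) *ᵥ v‖ ≤ C * Real.exp (-(c * s)) := by
  letI : SeminormedRing (Matrix (Fin p) (Fin p) ℂ) := Matrix.linftyOpSemiNormedRing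
  letI : NormedRing (Matrix (Fin p) (Fin p) ℂ) := Matrix.linftyOpNormedRing
  letI : NormedAlgebra ℂ (Matrix (Fin p) (Fin p) ℂ) := Matrix.linftyOpNormedAlgebra
  letI : NormedAlgebra ℚ (Matrix (Fin p) (Fin p) ℂ) := NormedAlgebra.restrictScalars ℚ ℂ _
  set N : Matrix (Fin p) (Fin p) ℂ := A - μ • 1 with hN
  set w : ℕ → (Fin p → ℂ) := fun n => (N ^ n) *ᵥ v with hw
  refine ⟨∑ n ∈ Finset.range K, ‖w n‖ / c ^ n, fun s hs => ?_⟩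
  -- split the exponential
  have hsplit : -(s • A) = (-(s * μ)) • (1 : Matrix (Fin p) (Fin p) ℂ) + ((-s : ℝ) : ℂ) • N := by
    have h1 : s • A = ((s : ℝ) : ℂ) • A := (algebraMap_smul ℂ s A).symm
    rw [hN, smul_sub]
    push_cast
    rw [h1]
    ring_nf
    module
  have hcomm : Commute ((-(s * μ)) • (1 : Matrix (Fin p) (Fin p) ℂ)) (((-s : ℝ) : ℂ) • N) :=
    ((Commute.one_left _).smul_left _).smul_right _
  have hexp1 : NormedSpace.exp ((-(s * μ)) • (1 : Matrix (Fin p) (Fin p) ℂ))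
      = Complex.exp (-(s * μ)) • (1 : Matrix (Fin p) (Fin p) ℂ) := by
    rw [← Algebra.algebraMap_eq_smul_one]
    erw [← NormedSpace.map_exp (algebraMap ℂ (Matrix (Fin p) (Fin p) ℂ))
      (continuous_algebraMap _ _)]
    rw [← Complex.exp_eq_exp_ℂ, Algebra.algebraMap_eq_smul_one]
  have hmain : NormedSpace.exp (-(s • A)) *ᵥ v
      = Complex.exp (-(s * μ)) • (NormedSpace.exp (((-s : ℝ) : ℂ) • N) *ᵥ v) := by
    rw [hsplit]
    erw [NormedSpace.exp_add_of_commute hcomm]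
    erw [hexp1]
    rw [smul_one_mul,
      Matrix.smul_mulVec]
    rfl
  -- expand the nilpotent exponential
  have hterm : ∀ n : ℕ, (mulVecLeft p v) ((n.factorial⁻¹ : ℂ) • (((-s : ℝ) : ℂ) • N) ^ n)
      = ((n.factorial⁻¹ : ℂ) * ((-s : ℝ) : ℂ) ^ n) • w n := by
    intro n
    rw [_root_.map_smul, smul_pow, _root_.map_smul, smul_smul]
    rfl
  have hzero : ∀ n ∉ Finset.range K,
      ((n.factorial⁻¹ : ℂ) * ((-s : ℝ) : ℂ) ^ n) • w n = 0 := by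
    intro n hn
    rw [Finset.mem_range, not_lt] at hn
    have : w n = 0 := by
      show N ^ n *ᵥ v = 0
      have hNn : N ^ n = N ^ (n - K) * N ^ K := by rw [← pow_add]; congr 1; omega
      rw [hNn, ← Matrix.mulVec_mulVec, hv, Matrix.mulVec_zero]
    rw [this, smul_zero]
  have hexpand : NormedSpace.exp (((-s : ℝ) : ℂ) • N) *ᵥ v
      = ∑ n ∈ Finset.range K, ((n.factorial⁻¹ : ℂ) * ((-s : ℝ) : ℂ) ^ n) • w n := by
    have hsummable := NormedSpace.expSeries_summable' (𝕂 := ℂ) (((-s : ℝ) : ℂ) • N)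
    have := ((mulVecLeft p v).toContinuousLinearMap).map_tsum hsummable
    rw [NormedSpace.exp_eq_tsum ℂ]
    calc (∑' n : ℕ, (n.factorial⁻¹ : ℂ) • (((-s : ℝ) : ℂ) • N) ^ n) *ᵥ v
        = (mulVecLeft p v).toContinuousLinearMap
            (∑' n : ℕ, (n.factorial⁻¹ : ℂ) • (((-s : ℝ) : ℂ) • N) ^ n) := rfl
      _ = ∑' n : ℕ, (mulVecLeft p v).toContinuousLinearMap
            ((n.factorial⁻¹ : ℂ) • (((-s : ℝ) : ℂ) • N) ^ n) := this
      _ = ∑' n : ℕ, ((n.factorial⁻¹ : ℂ) * ((-s : ℝ) : ℂ) ^ n) • w n := by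
            exact tsum_congr hterm
      _ = ∑ n ∈ Finset.range K, ((n.factorial⁻¹ : ℂ) * ((-s : ℝ) : ℂ) ^ n) • w n :=
            tsum_eq_sum hzero
  rw [hmain, norm_smul, hexpand]
  have habs : ‖Complex.exp (-(s * μ))‖ = Real.exp (-(s * μ.re)) := by
    rw [Complex.norm_exp]
    congr 1
    simp [Complex.re_ofReal_mul]
  rw [habs]
  calc Real.exp (-(s * μ.re)) * ‖∑ n ∈ Finset.range K,
        ((n.factorial⁻¹ : ℂ) * ((-s : ℝ) : ℂ) ^ n) • w n‖
      ≤ Real.exp (-(s * μ.re)) * ∑ n ∈ Finset.range K, (s ^ n / n.factorial) * ‖w n‖ := by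
        refine mul_le_mul_of_nonneg_left ?_ (Real.exp_nonneg _)
        refine le_trans (norm_sum_le _ _) (Finset.sum_le_sum fun n _ => ?_)
        rw [norm_smul]
        gcongr
        rw [norm_mul, norm_pow]
        simp only [Complex.norm_real, Real.norm_eq_abs, abs_neg, abs_of_nonneg hs]
        rw [div_eq_mul_inv, mul_comm]
        gcongr
        simp
    _ = ∑ n ∈ Finset.range K, Real.exp (-(s * μ.re)) * ((s ^ n / n.factorial) * ‖w n‖) := by
        rw [Finset.mul_sum]
    _ ≤ ∑ n ∈ Finset.range K, (‖w n‖ / c ^ n) * Real.exp (-(c * s)) := by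
        refine Finset.sum_le_sum fun n _ => ?_
        have h1 : s ^ n / n.factorial ≤ Real.exp (c * s) / c ^ n := aux_pow_le_exp hc hs n
        have h2 : Real.exp (-(s * μ.re)) ≤ Real.exp (-(2 * c * s)) := by
          apply Real.exp_le_exp.2; nlinarith
        calc Real.exp (-(s * μ.re)) * ((s ^ n / n.factorial) * ‖w n‖)
            ≤ Real.exp (-(2 * c * s)) * ((Real.exp (c * s) / c ^ n) * ‖w n‖) := by
              gcongr
          _ = (‖w n‖ / c ^ n) * (Real.exp (-(2 * c * s)) * Real.exp (c * s)) := by ring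
          _ = (‖w n‖ / c ^ n) * Real.exp (-(c * s)) := by
              rw [← Real.exp_add]; ring_nf
    _ = (∑ n ∈ Finset.range K, ‖w n‖ / c ^ n) * Real.exp (-(c * s)) := by
        rw [Finset.sum_mul]

lemma decay_bound (p : ℕ) (A : Matrix (Fin p) (Fin p) ℂ)
    (hA : ∀ μ ∈ spectrum ℂ A, 0 < μ.re) :
    ∃ c : ℝ, 0 < c ∧ ∀ v : Fin p → ℂ, ∃ C : ℝ, ∀ s : ℝ, 0 ≤ s →
      ‖NormedSpace.exp (-(s • A)) *ᵥ v‖ ≤ C * Real.exp (-(c * s)) := by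
  letI : SeminormedRing (Matrix (Fin p) (Fin p) ℂ) := Matrix.linftyOpSemiNormedRing
  letI : NormedRing (Matrix (Fin p) (Fin p) ℂ) := Matrix.linftyOpNormedRing
  letI : NormedAlgebra ℂ (Matrix (Fin p) (Fin p) ℂ) := Matrix.linftyOpNormedAlgebra
  rcases Nat.eq_zero_or_pos p with hp | hp
  · subst hp
    refine ⟨1, one_pos, fun v => ⟨0, fun s hs => ?_⟩⟩
    have : (NormedSpace.exp (-(s • A)) *ᵥ v) = 0 := Subsingleton.elim _ _
    rw [this, norm_zero, zero_mul]
  · haveI : NeZero p := ⟨hp.ne'⟩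
    -- spectrum is nonempty and compact; take the min of the real part
    obtain ⟨μ₀, hμ₀, hmin⟩ :=
      (spectrum.isCompact A).exists_isMinOn (spectrum.nonempty A)
        Complex.continuous_re.continuousOn
    refine ⟨μ₀.re / 2, by have := hA μ₀ hμ₀; linarith, fun v => ?_⟩
    set c : ℝ := μ₀.re / 2 with hc
    have hc0 : 0 < c := by have := hA μ₀ hμ₀; rw [hc]; linarith
    -- generalized eigenspace decomposition
    set f : Module.End ℂ (Fin p → ℂ) := Matrix.toLinAlgEquiv' A with hf
    have htop : v ∈ ⨆ μ : ℂ, f.maxGenEigenspace μ := by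
      rw [Module.End.iSup_maxGenEigenspace_eq_top]; trivial
    refine Submodule.iSup_induction (motive := fun x => ∃ C : ℝ, ∀ s : ℝ, 0 ≤ s →
      ‖NormedSpace.exp (-(s • A)) *ᵥ x‖ ≤ C * Real.exp (-(c * s)))
      (fun μ : ℂ => f.maxGenEigenspace μ) htop ?_ ?_ ?_
    · intro μ x hx
      obtain ⟨K, hK⟩ := (Module.End.mem_maxGenEigenspace f μ x).mp hx
      by_cases hμ : μ ∈ spectrum ℂ A
      · refine vec_bound p A μ x K ?_ c hc0 ?_
        · have hpow2 : Matrix.toLinAlgEquiv' ((A - μ • 1) ^ K) = (f - μ • 1) ^ K := by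
            rw [map_pow, map_sub, _root_.map_smul, _root_.map_one, hf]
          calc ((A - μ • 1) ^ K) *ᵥ x
              = (Matrix.toLinAlgEquiv' ((A - μ • 1) ^ K)) x :=
                (Matrix.toLinAlgEquiv'_apply _ _).symm
            _ = ((f - μ • 1) ^ K) x := by rw [hpow2]
            _ = 0 := hK
        · have h := hmin hμ
          simp only [Set.mem_setOf_eq] at h
          rw [hc]; linarith
      · -- x must be zero
        have hnu : IsUnit (algebraMap ℂ (Module.End ℂ (Fin p → ℂ)) μ - f) :=
          spectrum.notMem_iff.mp (by
            rwa [← AlgEquiv.spectrum_eq (Matrix.toLinAlgEquiv' (R := ℂ)) A] at hμ)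
        have hunit : IsUnit ((f - μ • 1) ^ K) := by
          have : f - μ • 1 = -(algebraMap ℂ (Module.End ℂ (Fin p → ℂ)) μ - f) := by
            rw [neg_sub, Algebra.algebraMap_eq_smul_one]
          rw [this]
          exact hnu.neg.pow K
        have hx0 : x = 0 := by
          have h1 : (↑hunit.unit⁻¹ * (f - μ • 1) ^ K) x = x := by
            rw [hunit.val_inv_mul]; rfl
          rw [Module.End.mul_apply, hK, map_zero] at h1
          exact h1.symm
        exact ⟨0, fun s hs => by
          rw [hx0, Matrix.mulVec_zero, norm_zero, zero_mul]⟩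
    · exact ⟨0, fun s hs => by rw [Matrix.mulVec_zero, norm_zero, zero_mul]⟩
    · rintro x y ⟨C₁, h₁⟩ ⟨C₂, h₂⟩
      refine ⟨C₁ + C₂, fun s hs => ?_⟩
      rw [Matrix.mulVec_add, add_mul]
      exact le_trans (norm_add_le _ _) (add_le_add (h₁ s hs) (h₂ s hs))

lemma real_entry_bound (p : ℕ) (B : Matrix (Fin p) (Fin p) ℝ)
    (hB : ∀ μ ∈ spectrum ℂ (B.map (Complex.ofReal)), 0 < μ.re) :
    ∃ c : ℝ, 0 < c ∧ ∀ i j : Fin p, ∃ C : ℝ, ∀ s : ℝ, 0 ≤ s →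
      |NormedSpace.exp (-(s • B)) i j| ≤ C * Real.exp (-(c * s)) := by
  set A : Matrix (Fin p) (Fin p) ℂ := B.map Complex.ofReal with hA
  obtain ⟨c, hc, hdecay⟩ := decay_bound p A hB
  have hmapexp : ∀ s : ℝ,
      (NormedSpace.exp (-(s • B))).map Complex.ofReal = NormedSpace.exp (-(s • A)) := by
    intro s
    letI : SeminormedRing (Matrix (Fin p) (Fin p) ℝ) := Matrix.linftyOpSemiNormedRing
    letI : NormedRing (Matrix (Fin p) (Fin p) ℝ) := Matrix.linftyOpNormedRing
    letI : NormedAlgebra ℝ (Matrix (Fin p) (Fin p) ℝ) := Matrix.linftyOpNormedAlgebra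
    letI : SeminormedRing (Matrix (Fin p) (Fin p) ℂ) := Matrix.linftyOpSemiNormedRing
    letI : NormedRing (Matrix (Fin p) (Fin p) ℂ) := Matrix.linftyOpNormedRing
    letI : NormedAlgebra ℝ (Matrix (Fin p) (Fin p) ℂ) := Matrix.linftyOpNormedAlgebra
    letI : NormedAlgebra ℂ (Matrix (Fin p) (Fin p) ℂ) := Matrix.linftyOpNormedAlgebra
    letI : NormedAlgebra ℚ (Matrix (Fin p) (Fin p) ℝ) := NormedAlgebra.restrictScalars ℚ ℝ _
    letI : NormedAlgebra ℚ (Matrix (Fin p) (Fin p) ℂ) := NormedAlgebra.restrictScalars ℚ ℂ _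
    have hcontmap : Continuous
        (Complex.ofRealHom.mapMatrix : Matrix (Fin p) (Fin p) ℝ →+* Matrix (Fin p) (Fin p) ℂ) :=
      continuous_id.matrix_map Complex.continuous_ofReal
    have h1 := NormedSpace.map_exp
      (Complex.ofRealHom.mapMatrix : Matrix (Fin p) (Fin p) ℝ →+* Matrix (Fin p) (Fin p) ℂ)
      hcontmap (-(s • B))
    have h2 : (-(s • B)).map Complex.ofReal = -(s • A) := by
      ext i j
      simp [Matrix.map_apply, hA]
    rw [RingHom.mapMatrix_apply] at h1
    calc (NormedSpace.exp (-(s • B))).map Complex.ofReal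
        = NormedSpace.exp ((-(s • B)).map Complex.ofReal) := h1
      _ = NormedSpace.exp (-(s • A)) := by rw [h2]
      _ = NormedSpace.exp (-(s • A)) := rfl
  refine ⟨c, hc, fun i j => ?_⟩
  obtain ⟨C, hC⟩ := hdecay (Pi.single j 1)
  refine ⟨C, fun s hs => ?_⟩
  have hentry : ((NormedSpace.exp (-(s • B)) i j : ℝ) : ℂ)
      = NormedSpace.exp (-(s • A)) i j := by
    rw [← hmapexp s]; rfl
  have h3 : NormedSpace.exp (-(s • A)) i j
      = (NormedSpace.exp (-(s • A)) *ᵥ Pi.single j 1) i := by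
    simp [Matrix.mulVec_single]
  calc |NormedSpace.exp (-(s • B)) i j|
      = ‖((NormedSpace.exp (-(s • B)) i j : ℝ) : ℂ)‖ := (Complex.norm_real _).symm
    _ = ‖(NormedSpace.exp (-(s • A)) *ᵥ Pi.single j 1) i‖ := by rw [hentry, h3]
    _ ≤ ‖NormedSpace.exp (-(s • A)) *ᵥ Pi.single j 1‖ := norm_le_pi_norm _ i
    _ ≤ C * Real.exp (-(c * s)) := hC s hs


/-- if every complex eigenvalue of `B` has strictly positive real part, then
`B` is invertible and the improper integral `∫_0^∞ exp (-sB) ds` converges entrywise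
and equals `B⁻¹`. -/
theorem stmt11 (p : ℕ) (B : Matrix (Fin p) (Fin p) ℝ)
    (hB : ∀ μ ∈ spectrum ℂ (B.map (Complex.ofReal)), 0 < μ.re) :
    IsUnit B ∧
    (∀ i j : Fin p, IntegrableOn (fun s : ℝ => NormedSpace.exp (-(s • B)) i j)
      (Set.Ioi (0 : ℝ))) ∧
    (∀ i j : Fin p,
      ∫ s in Set.Ioi (0 : ℝ), NormedSpace.exp (-(s • B)) i j = B⁻¹ i j) := by
  -- invertibility
  have h0 : (0 : ℂ) ∉ spectrum ℂ (B.map Complex.ofReal) := fun h => by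
    simpa using hB 0 h
  have hUA : IsUnit (B.map Complex.ofReal) := spectrum.zero_notMem_iff ℂ |>.mp h0
  have hdetA : IsUnit (B.map Complex.ofReal).det := (Matrix.isUnit_iff_isUnit_det _).mp hUA
  have hdetmap : (B.map Complex.ofReal).det = (B.det : ℂ) :=
    (RingHom.map_det Complex.ofRealHom B).symm
  have hdetB : IsUnit B.det := by
    rw [isUnit_iff_ne_zero]
    intro h
    rw [hdetmap, h] at hdetA
    simpa using hdetA
  have hUB : IsUnit B := (Matrix.isUnit_iff_isUnit_det B).mpr hdetB
  -- decay bound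
  obtain ⟨c, hc, hbound⟩ := real_entry_bound p B hB
  -- continuity
  have hcont : Continuous fun s : ℝ => NormedSpace.exp (-(s • B)) := by
    letI : SeminormedRing (Matrix (Fin p) (Fin p) ℝ) := Matrix.linftyOpSemiNormedRing
    letI : NormedRing (Matrix (Fin p) (Fin p) ℝ) := Matrix.linftyOpNormedRing
    letI : NormedAlgebra ℝ (Matrix (Fin p) (Fin p) ℝ) := Matrix.linftyOpNormedAlgebra
    letI : NormedAlgebra ℚ (Matrix (Fin p) (Fin p) ℝ) := NormedAlgebra.restrictScalars ℚ ℝ _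
    exact NormedSpace.exp_continuous.comp ((continuous_id.smul continuous_const).neg)
  have hcontE : ∀ i j : Fin p, Continuous fun s : ℝ => NormedSpace.exp (-(s • B)) i j :=
    fun i j => (continuous_apply j).comp ((continuous_apply i).comp hcont)
  -- integrability of the comparison function
  have hgint : IntegrableOn (fun s : ℝ => Real.exp (-(c * s))) (Set.Ioi (0 : ℝ)) := by
    simpa [neg_mul] using exp_neg_integrableOn_Ioi 0 hc
  have hint : ∀ i j : Fin p, IntegrableOn (fun s : ℝ => NormedSpace.exp (-(s • B)) i j)
      (Set.Ioi (0 : ℝ)) := by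
    intro i j
    obtain ⟨C, hC⟩ := hbound i j
    refine Integrable.mono' (hgint.const_mul C) ((hcontE i j).aestronglyMeasurable) ?_
    refine (ae_restrict_iff' measurableSet_Ioi).mpr (ae_of_all _ fun s hs => ?_)
    simpa [Real.norm_eq_abs] using hC s (le_of_lt hs)
  -- entrywise decay to zero
  have htend0 : ∀ i j : Fin p,
      Filter.Tendsto (fun s : ℝ => NormedSpace.exp (-(s • B)) i j) Filter.atTop (nhds 0) := by
    intro i j
    obtain ⟨C, hC⟩ := hbound i j
    have hg : Filter.Tendsto (fun s : ℝ => C * Real.exp (-(c * s))) Filter.atTop (nhds 0) := by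
      have h1 : Filter.Tendsto (fun s : ℝ => -(c * s)) Filter.atTop Filter.atBot :=
        Filter.tendsto_neg_atBot_iff.mpr (Filter.Tendsto.const_mul_atTop hc Filter.tendsto_id)
      simpa using (Real.tendsto_exp_atBot.comp h1).const_mul C
    refine squeeze_zero_norm' ?_ hg
    filter_upwards [Filter.Ici_mem_atTop (0 : ℝ)] with s hs
    simpa [Real.norm_eq_abs] using hC s hs
  refine ⟨hUB, hint, fun i j => ?_⟩
  -- fundamental theorem of calculus on [0, ∞)
  letI : SeminormedRing (Matrix (Fin p) (Fin p) ℝ) := Matrix.linftyOpSemiNormedRing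
  letI : NormedRing (Matrix (Fin p) (Fin p) ℝ) := Matrix.linftyOpNormedRing
  letI : NormedAlgebra ℝ (Matrix (Fin p) (Fin p) ℝ) := Matrix.linftyOpNormedAlgebra
  set g : ℝ → ℝ := fun s => -((NormedSpace.exp (-(s • B)) * B⁻¹) i j) with hg
  -- the entry-extraction linear map
  set L : Matrix (Fin p) (Fin p) ℝ →ₗ[ℝ] ℝ :=
    { toFun := fun M => -((M * B⁻¹) i j)
      map_add' := fun M N => by
        simp only [Matrix.add_mul, Matrix.add_apply]; ring
      map_smul' := fun a M => by
        simp only [Matrix.smul_mul, Matrix.smul_apply, smul_eq_mul, RingHom.id_apply]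
        ring } with hL
  have hderiv : ∀ x : ℝ, x ∈ Set.Ici (0:ℝ) →
      HasDerivAt g (NormedSpace.exp (-(x • B)) i j) x := by
    intro x _
    have h1 : HasDerivAt (fun u : ℝ => NormedSpace.exp (u • (-B)))
        (NormedSpace.exp (x • (-B)) * (-B)) x := hasDerivAt_exp_smul_const (-B) x
    have h2 := (L.toContinuousLinearMap.hasFDerivAt.comp_hasDerivAt x h1)
    have h3 : (fun u : ℝ => L.toContinuousLinearMap (NormedSpace.exp (u • (-B)))) = g := by
      funext u
      simp only [hg, hL, LinearMap.coe_toContinuousLinearMap', LinearMap.coe_mk, AddHom.coe_mk,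
        smul_neg]
    have h4 : L.toContinuousLinearMap (NormedSpace.exp (x • (-B)) * (-B))
        = NormedSpace.exp (-(x • B)) i j := by
      show -(((NormedSpace.exp (x • (-B)) * (-B)) * B⁻¹) i j) = _
      rw [Matrix.mul_assoc, Matrix.neg_mul, Matrix.mul_neg, Matrix.mul_nonsing_inv B hdetB,
        Matrix.mul_one, Matrix.neg_apply, neg_neg, smul_neg]
    rw [← h3, ← h4]
    exact h2
  have htendg : Filter.Tendsto g Filter.atTop (nhds 0) := by
    have h1 : Filter.Tendsto (fun s : ℝ => (NormedSpace.exp (-(s • B)) * B⁻¹) i j)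
        Filter.atTop (nhds 0) := by
      have h2 : ∀ s : ℝ, (NormedSpace.exp (-(s • B)) * B⁻¹) i j
          = ∑ k : Fin p, NormedSpace.exp (-(s • B)) i k * B⁻¹ k j := fun s =>
        Matrix.mul_apply
      rw [funext h2]
      have := tendsto_finset_sum (Finset.univ : Finset (Fin p))
        (fun k _ => (htend0 i k).mul_const (B⁻¹ k j))
      simpa using this
    simpa using h1.neg
  have hftc := integral_Ioi_of_hasDerivAt_of_tendsto' hderiv (hint i j) htendg
  rw [hftc, hg]
  simp [NormedSpace.exp_zero]
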